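/- Let h ≥ h' ≥ 1 and let h_1, h_2 be positive integers with (h_1 − 1)(h_2 − 1) ≥ h − h'. Assume m − h_1 ≥ 2 and n − h_2 ≥ 2. If there exists an MR (m, n, a=1, b=1, h) grid code over a finite field F_q, then there also exists an MR (m−h_1, n−h_2, a=1, b=1, h') grid code over the same field F_q. In particular, q(m, n, 1, 1, h) ≥ q(m−h_1, n−h_2, 1, 1, h'), where q(·) denotes the minimum field size over which an MR grid code with those parameters exists. -/

import Mathlib

open Finset

/-- A subset of `[m] × [n]`, viewed as the edge set of a bipartite graph with left
vertex set `Fin m` and right vertex set `Fin n`, is a *simple cycle* (of length `2k`,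
`k ≥ 2`) if it has the form
`{(i₁,j₁),(i₂,j₁),(i₂,j₂),(i₃,j₂),…,(i_k,j_k),(i₁,j_k)}`
for pairwise distinct `i₁,…,i_k` and pairwise distinct `j₁,…,j_k`. -/
def IsSimpleCycle {m n : ℕ} (C : Finset (Fin m × Fin n)) : Prop :=
  ∃ k : ℕ, 2 ≤ k ∧ ∃ (I : ℕ → Fin m) (J : ℕ → Fin n),
    Set.InjOn I (Set.Iio k) ∧ Set.InjOn J (Set.Iio k) ∧
    C = ((Finset.range k).image fun ℓ => (I ℓ, J ℓ)) ∪
        ((Finset.range k).image fun ℓ => (I ((ℓ + 1) % k), J ℓ))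

/-- An edge set is *acyclic* if it contains no simple cycle. -/
def IsAcyclicEdges {m n : ℕ} (E : Finset (Fin m × Fin n)) : Prop :=
  ∀ C ⊆ E, ¬ IsSimpleCycle C

/-- The parity-check matrix of an `(m, n, a = 1, b = 1, h)` grid code over `F` with
global parity-check vectors `c`.  Rows are indexed by `Fin m ⊕ (Fin (n-1) ⊕ Fin h)`
(the `m` row checks, the first `n - 1` column checks, and the `h` global checks) and
columns by `Fin m × Fin n`. -/
def gridH (F : Type*) [Field F] (m n h : ℕ) (c : Fin m × Fin n → Fin h → F) :
    Matrix (Fin m ⊕ (Fin (n - 1) ⊕ Fin h)) (Fin m × Fin n) F :=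
  Matrix.of fun r ij =>
    Sum.elim (fun i => if ij.1 = i then (1 : F) else 0)
      (Sum.elim (fun j : Fin (n - 1) => if (ij.2 : ℕ) = (j : ℕ) then (1 : F) else 0)
        (fun k => c ij k)) r

/-- The grid code with global parity checks `c` is *maximally recoverable* (MR) if the
columns of its parity-check matrix indexed by `E` are linearly independent for every
pattern `E` which is the union of an acyclic edge set and at most `h` further edges. -/
def IsMR (F : Type*) [Field F] (m n h : ℕ) (c : Fin m × Fin n → Fin h → F) : Prop :=
  ∀ E : Finset (Fin m × Fin n),
    (∃ E' F' : Finset (Fin m × Fin n),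
        IsAcyclicEdges E' ∧ F'.card ≤ h ∧ E = E' ∪ F') →
    ((gridH F m n h c).submatrix id (fun e : E => (e : Fin m × Fin n))).rank = E.card

/-- A *spanning tree* of the complete bipartite graph on `[m] ⊔ [n]`: an acyclic edge
set with `m + n - 1` edges. -/
def IsSpanningTree {m n : ℕ} (T : Finset (Fin m × Fin n)) : Prop :=
  IsAcyclicEdges T ∧ T.card = m + n - 1

/-- `IsCycleSumOf c C s` says `C` is a simple cycle
`{(i₁,j₁),(i₂,j₁),…,(i_k,j_k),(i₁,j_k)}` and
`s = Σ_{ℓ=1}^{k} (c^{i_ℓ,j_ℓ} − c^{i_{ℓ+1},j_ℓ})` (with `i_{k+1} := i₁`) is the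
corresponding cycle sum `Σ_H(C) ∈ F^h`. -/
def IsCycleSumOf {F : Type*} [Field F] {m n h : ℕ} (c : Fin m × Fin n → Fin h → F)
    (C : Finset (Fin m × Fin n)) (s : Fin h → F) : Prop :=
  ∃ k : ℕ, 2 ≤ k ∧ ∃ (I : ℕ → Fin m) (J : ℕ → Fin n),
    Set.InjOn I (Set.Iio k) ∧ Set.InjOn J (Set.Iio k) ∧
    C = ((Finset.range k).image fun ℓ => (I ℓ, J ℓ)) ∪
        ((Finset.range k).image fun ℓ => (I ((ℓ + 1) % k), J ℓ)) ∧
    s = ∑ ℓ ∈ Finset.range k, (c (I ℓ, J ℓ) - c (I ((ℓ + 1) % k), J ℓ))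

/-- `IsGammaCycleSumOf γ C g` says `C` is a simple cycle and
`g = γ(C) = Σ_{ℓ=1}^{k} (γ(i_ℓ,j_ℓ) − γ(i_{ℓ+1},j_ℓ))`. -/
def IsGammaCycleSumOf {F : Type*} [Field F] {m n : ℕ} (γ : Fin m × Fin n → F)
    (C : Finset (Fin m × Fin n)) (g : F) : Prop :=
  ∃ k : ℕ, 2 ≤ k ∧ ∃ (I : ℕ → Fin m) (J : ℕ → Fin n),
    Set.InjOn I (Set.Iio k) ∧ Set.InjOn J (Set.Iio k) ∧
    C = ((Finset.range k).image fun ℓ => (I ℓ, J ℓ)) ∪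
        ((Finset.range k).image fun ℓ => (I ((ℓ + 1) % k), J ℓ)) ∧
    g = ∑ ℓ ∈ Finset.range k, (γ (I ℓ, J ℓ) - γ (I ((ℓ + 1) % k), J ℓ))

section Lemmas
open Matrix

variable {F : Type*} [Field F]

lemma rank_eq_card_iff_li {R C : Type*} [Fintype R] [Fintype C]
    (N : Matrix R C F) : N.rank = Fintype.card C ↔ LinearIndependent F N.transpose := by
  rw [Matrix.rank_eq_finrank_span_cols]
  refine Iff.trans ?_ (linearIndependent_iff_card_eq_finrank_span (b := N.col)).symm
  exact eq_comm

lemma isMR_iff_kernel (m n h : ℕ) (c : Fin m × Fin n → Fin h → F) :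
    IsMR F m n h c ↔
      ∀ E : Finset (Fin m × Fin n),
        (∃ E' F' : Finset (Fin m × Fin n), IsAcyclicEdges E' ∧ F'.card ≤ h ∧ E = E' ∪ F') →
        ∀ z : Fin m × Fin n → F, (∀ e, e ∉ E → z e = 0) →
          (gridH F m n h c).mulVec z = 0 → z = 0 := by
  classical
  set M := gridH F m n h c with hM
  constructor
  · intro hMR E hE z hsupp hker
    have hrank := hMR E hE
    rw [show E.card = Fintype.card E from (Fintype.card_coe E).symm, rank_eq_card_iff_li] at hrank
    have hli := Fintype.linearIndependent_iff.mp hrank (fun e => z e.1) ?_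
    · funext ij
      by_cases hij : ij ∈ E
      · exact hli ⟨ij, hij⟩
      · exact hsupp ij hij
    · funext r
      have h1 : (∑ e : E, z e.1 • (M.submatrix id (fun e : E => (e : Fin m × Fin n))).transpose e) r
          = ∑ e : E, z e.1 * M r e.1 := by
        simp [Matrix.transpose, Matrix.submatrix, mul_comm]
      rw [h1]
      have h2 : ∑ e : E, z e.1 * M r e.1 = ∑ ij ∈ E, z ij * M r ij :=
        Finset.sum_coe_sort E (fun ij => z ij * M r ij)
      rw [h2]
      have h3 : ∑ ij ∈ E, z ij * M r ij = ∑ ij : Fin m × Fin n, z ij * M r ij := by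
        apply Finset.sum_subset (Finset.subset_univ E)
        intro x _ hx
        rw [hsupp x hx, zero_mul]
      rw [h3]
      have := congrFun hker r
      rw [Matrix.mulVec, dotProduct] at this
      simpa [mul_comm] using this
  · intro hker E hE
    rw [show E.card = Fintype.card E from (Fintype.card_coe E).symm, rank_eq_card_iff_li]
    apply Fintype.linearIndependent_iff.mpr
    intro g hg e
    set z : Fin m × Fin n → F := fun ij => if hij : ij ∈ E then g ⟨ij, hij⟩ else 0 with hz
    have hzz : z = 0 := by
      apply hker E hE z
      · intro e' he'
        simp [hz, he']
      · funext r
        rw [Matrix.mulVec, dotProduct, Pi.zero_apply]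
        have h3 : ∑ ij : Fin m × Fin n, M r ij * z ij = ∑ ij ∈ E, M r ij * z ij := by
          symm
          apply Finset.sum_subset (Finset.subset_univ E)
          intro x _ hx
          simp [hz, hx]
        rw [h3]
        have h2 : ∑ ij ∈ E, M r ij * z ij = ∑ e : E, M r e.1 * z e.1 :=
          (Finset.sum_coe_sort E (fun ij => M r ij * z ij)).symm
        rw [h2]
        have := congrFun hg r
        simp only [Finset.sum_apply, Pi.smul_apply, Pi.zero_apply] at this
        rw [← this]
        apply Finset.sum_congr rfl
        intro e' _
        simp [hz, e'.2, Matrix.transpose, Matrix.submatrix, mul_comm, hM]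
    have : z e.1 = g e := by simp [hz, e.2]
    rw [← this, hzz]
    rfl

end Lemmas

section Lemmas2
open Matrix Finset

variable {F : Type*} [Field F] {m n h : ℕ} {c : Fin m × Fin n → Fin h → F}

lemma gridH_mulVec_row (z : Fin m × Fin n → F) (i : Fin m) :
    (gridH F m n h c).mulVec z (Sum.inl i) = ∑ j, z (i, j) := by
  rw [Matrix.mulVec, dotProduct, Fintype.sum_prod_type]
  simp [gridH, ite_mul]

lemma gridH_mulVec_col (z : Fin m × Fin n → F) (j : Fin (n - 1)) :
    (gridH F m n h c).mulVec z (Sum.inr (Sum.inl j))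
      = ∑ i, z (i, Fin.castLE (Nat.sub_le n 1) j) := by
  rw [Matrix.mulVec, dotProduct, Fintype.sum_prod_type_right]
  have hcond : ∀ p : Fin m × Fin n, ((p.2 : ℕ) = (j : ℕ)) ↔ p.2 = Fin.castLE (Nat.sub_le n 1) j := by
    intro p; rw [Fin.ext_iff]; rfl
  simp only [gridH, Matrix.of_apply, Sum.elim_inr, Sum.elim_inl]
  rw [Finset.sum_comm]
  simp only [ite_mul, one_mul, zero_mul]
  have hin : ∀ x : Fin m, (∑ x1 : Fin n, if (x1 : ℕ) = (j : ℕ) then z (x, x1) else 0)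
      = z (x, Fin.castLE (Nat.sub_le n 1) j) := by
    intro x
    rw [Finset.sum_congr rfl (fun x1 _ => by rw [if_congr (hcond (x, x1)) rfl rfl])]
    simp
  exact Finset.sum_congr rfl fun x _ => hin x

lemma gridH_mulVec_glob (z : Fin m × Fin n → F) (k : Fin h) :
    (gridH F m n h c).mulVec z (Sum.inr (Sum.inr k)) = ∑ p, c p k * z p := by
  simp [gridH, Matrix.mulVec, dotProduct]

lemma colsum_all (z : Fin m × Fin n → F)
    (hrow : ∀ i, ∑ j, z (i, j) = 0)
    (hcol : ∀ j : Fin (n - 1), ∑ i, z (i, Fin.castLE (Nat.sub_le n 1) j) = 0)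
    (j : Fin n) : ∑ i, z (i, j) = 0 := by
  by_cases hj : (j : ℕ) < n - 1
  · have hcast : Fin.castLE (Nat.sub_le n 1) ⟨(j : ℕ), hj⟩ = j := by
      apply Fin.ext; rfl
    have := hcol ⟨(j : ℕ), hj⟩
    rwa [hcast] at this
  · have hS : ∑ j' : Fin n, ∑ i, z (i, j') = 0 := by
      rw [Finset.sum_comm]
      simp [hrow]
    have hrest : ∀ j' ∈ Finset.univ.erase j, ∑ i, z (i, j') = 0 := by
      intro j' hj'
      have hne : j' ≠ j := (Finset.mem_erase.mp hj').1
      have hlt : (j' : ℕ) < n - 1 := by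
        have h1 : (j' : ℕ) < n := j'.2
        have h2 : (j' : ℕ) ≠ (j : ℕ) := fun hh => hne (Fin.ext hh)
        have h3 : (j : ℕ) < n := j.2
        omega
      have hcast : Fin.castLE (Nat.sub_le n 1) ⟨(j' : ℕ), hlt⟩ = j' := by
        apply Fin.ext; rfl
      have := hcol ⟨(j' : ℕ), hlt⟩
      rwa [hcast] at this
    have := Finset.add_sum_erase Finset.univ (fun j' => ∑ i, z (i, j')) (Finset.mem_univ j)
    rw [Finset.sum_eq_zero hrest] at this
    rw [hS] at this
    simpa using this

end Lemmas2

section Lemmas3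
open Finset

variable {m n : ℕ}

lemma cycle_mem₁ {C : Finset (Fin m × Fin n)} {k : ℕ} {I : ℕ → Fin m} {J : ℕ → Fin n}
    (hC : C = ((Finset.range k).image fun ℓ => (I ℓ, J ℓ)) ∪
        ((Finset.range k).image fun ℓ => (I ((ℓ + 1) % k), J ℓ)))
    {ℓ : ℕ} (hℓ : ℓ < k) : (I ℓ, J ℓ) ∈ C := by
  rw [hC]
  exact Finset.mem_union_left _ (Finset.mem_image.mpr ⟨ℓ, Finset.mem_range.mpr hℓ, rfl⟩)

lemma cycle_mem₂ {C : Finset (Fin m × Fin n)} {k : ℕ} {I : ℕ → Fin m} {J : ℕ → Fin n}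
    (hC : C = ((Finset.range k).image fun ℓ => (I ℓ, J ℓ)) ∪
        ((Finset.range k).image fun ℓ => (I ((ℓ + 1) % k), J ℓ)))
    {ℓ : ℕ} (hℓ : ℓ < k) : (I ((ℓ + 1) % k), J ℓ) ∈ C := by
  rw [hC]
  exact Finset.mem_union_right _ (Finset.mem_image.mpr ⟨ℓ, Finset.mem_range.mpr hℓ, rfl⟩)

lemma succ_mod_ne {k ℓ : ℕ} (hk : 2 ≤ k) (hℓ : ℓ < k) : (ℓ + 1) % k ≠ ℓ := by
  rcases Nat.lt_or_ge (ℓ + 1) k with hh | hh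
  · rw [Nat.mod_eq_of_lt hh]; omega
  · have : ℓ + 1 = k := by omega
    rw [this, Nat.mod_self]; omega

/-- A "star" edge set (every edge touches the row `r0` or the column `s0`) is acyclic. -/
lemma star_acyclic (r0 : Fin m) (s0 : Fin n) (A : Finset (Fin m × Fin n))
    (hA : ∀ e ∈ A, e.1 = r0 ∨ e.2 = s0) : IsAcyclicEdges A := by
  rintro C hCA ⟨k, hk, I, J, hI, hJ, hC⟩
  have hJs0 : ∀ ℓ < k, J ℓ = s0 := by
    intro ℓ hℓ
    have h1 := hA _ (hCA (cycle_mem₁ hC hℓ))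
    have h2 := hA _ (hCA (cycle_mem₂ hC hℓ))
    by_contra hne
    simp only [hne, or_false] at h1 h2
    have : I ((ℓ + 1) % k) = I ℓ := by rw [h1, h2]
    have := hI (Set.mem_Iio.mpr (Nat.mod_lt _ (by omega))) (Set.mem_Iio.mpr hℓ) this
    exact succ_mod_ne hk hℓ this
  have h0 := hJs0 0 (by omega)
  have h1 := hJs0 1 (by omega)
  have : (0 : ℕ) = 1 := hJ (Set.mem_Iio.mpr (by omega)) (Set.mem_Iio.mpr (by omega)) (h0.trans h1.symm)
  omega

/-- Along a simple cycle contained in a union of a "small" part and a "big" part,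
all edges are on the same side. -/
lemma cycle_side {m' n' : ℕ} {C : Finset (Fin m × Fin n)} {k : ℕ}
    {I : ℕ → Fin m} {J : ℕ → Fin n} (hk : 2 ≤ k)
    (hC : C = ((Finset.range k).image fun ℓ => (I ℓ, J ℓ)) ∪
        ((Finset.range k).image fun ℓ => (I ((ℓ + 1) % k), J ℓ)))
    (hside : ∀ e ∈ C, ((e.1 : ℕ) < m' ∧ (e.2 : ℕ) < n') ∨ (m' ≤ (e.1 : ℕ) ∧ n' ≤ (e.2 : ℕ))) :
    (∀ e ∈ C, (e.1 : ℕ) < m' ∧ (e.2 : ℕ) < n') ∨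
    (∀ e ∈ C, m' ≤ (e.1 : ℕ) ∧ n' ≤ (e.2 : ℕ)) := by
  have hiff : ∀ e ∈ C, (((e.1 : ℕ) < m') ↔ ((e.2 : ℕ) < n')) := by
    intro e he
    rcases hside e he with ⟨h1, h2⟩ | ⟨h1, h2⟩
    · exact iff_of_true h1 h2
    · exact iff_of_false (by omega) (by omega)
  -- Q ℓ : (J ℓ : ℕ) < n'
  have hQstep : ∀ ℓ < k, (((J ℓ : ℕ) < n') ↔ ((I ((ℓ + 1) % k) : ℕ) < m')) := by
    intro ℓ hℓ
    exact (hiff _ (cycle_mem₂ hC hℓ)).symm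
  have hQstep' : ∀ ℓ < k, (((I ℓ : ℕ) < m') ↔ ((J ℓ : ℕ) < n')) := by
    intro ℓ hℓ
    exact hiff _ (cycle_mem₁ hC hℓ)
  have hconst : ∀ ℓ < k, (((J 0 : ℕ) < n') ↔ ((J ℓ : ℕ) < n')) := by
    intro ℓ hℓ
    induction ℓ with
    | zero => rfl
    | succ p ih =>
      have hp : p < k := by omega
      have h1 := hQstep p hp
      have hmod : (p + 1) % k = p + 1 := Nat.mod_eq_of_lt hℓ
      rw [hmod] at h1
      have h2 := hQstep' (p + 1) hℓ
      exact (ih hp).trans (h1.trans h2)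
  by_cases hQ0 : (J 0 : ℕ) < n'
  · left
    intro e he
    have : ∃ ℓ < k, e = (I ℓ, J ℓ) ∨ e = (I ((ℓ + 1) % k), J ℓ) := by
      rw [hC] at he
      rcases Finset.mem_union.mp he with hh | hh <;>
        · obtain ⟨ℓ, hℓ, rfl⟩ := Finset.mem_image.mp hh
          exact ⟨ℓ, Finset.mem_range.mp hℓ, by simp⟩
    obtain ⟨ℓ, hℓ, hor⟩ := this
    have hJℓ : (J ℓ : ℕ) < n' := (hconst ℓ hℓ).mp hQ0
    rcases hor with rfl | rfl
    · exact ⟨(hQstep' ℓ hℓ).mpr hJℓ, hJℓ⟩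
    · exact ⟨(hQstep ℓ hℓ).mp hJℓ, hJℓ⟩
  · right
    intro e he
    have : ∃ ℓ < k, e = (I ℓ, J ℓ) ∨ e = (I ((ℓ + 1) % k), J ℓ) := by
      rw [hC] at he
      rcases Finset.mem_union.mp he with hh | hh <;>
        · obtain ⟨ℓ, hℓ, rfl⟩ := Finset.mem_image.mp hh
          exact ⟨ℓ, Finset.mem_range.mp hℓ, by simp⟩
    obtain ⟨ℓ, hℓ, hor⟩ := this
    have hJℓ : ¬ (J ℓ : ℕ) < n' := fun hh => hQ0 ((hconst ℓ hℓ).mpr hh)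
    rcases hor with rfl | rfl
    · have hI : ¬ (I ℓ : ℕ) < m' := fun hh => hJℓ ((hQstep' ℓ hℓ).mp hh)
      refine ⟨?_, ?_⟩ <;> dsimp only <;> omega
    · have hI : ¬ (I ((ℓ + 1) % k) : ℕ) < m' := fun hh => hJℓ ((hQstep ℓ hℓ).mpr hh)
      refine ⟨?_, ?_⟩ <;> dsimp only <;> omega

end Lemmas3

section Lemmas4
open Finset

lemma embed_acyclic {m' n' m n : ℕ} (hm : m' ≤ m) (hn : n' ≤ n) (hm2 : 0 < m') (hn2 : 0 < n')
    (E' : Finset (Fin m' × Fin n')) (hE' : IsAcyclicEdges E') :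
    IsAcyclicEdges (E'.image fun e => (Fin.castLE hm e.1, Fin.castLE hn e.2)) := by
  rintro C hCA ⟨k, hk, I, J, hI, hJ, hC⟩
  have hsmall : ∀ ℓ < k, ((I ℓ : ℕ) < m' ∧ (J ℓ : ℕ) < n') := by
    intro ℓ hℓ
    obtain ⟨e', he', heq⟩ := Finset.mem_image.mp (hCA (cycle_mem₁ hC hℓ))
    constructor
    · have h1 : I ℓ = Fin.castLE hm e'.1 := (congrArg Prod.fst heq).symm
      rw [h1]; exact e'.1.2
    · have h1 : J ℓ = Fin.castLE hn e'.2 := (congrArg Prod.snd heq).symm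
      rw [h1]; exact e'.2.2
  classical
  set I' : ℕ → Fin m' := fun ℓ => if hh : ℓ < k then ⟨(I ℓ : ℕ), (hsmall ℓ hh).1⟩ else ⟨0, hm2⟩
    with hI'def
  set J' : ℕ → Fin n' := fun ℓ => if hh : ℓ < k then ⟨(J ℓ : ℕ), (hsmall ℓ hh).2⟩ else ⟨0, hn2⟩
    with hJ'def
  have hIval : ∀ ℓ < k, (I' ℓ : ℕ) = (I ℓ : ℕ) := fun ℓ hℓ => by simp [hI'def, hℓ]
  have hJval : ∀ ℓ < k, (J' ℓ : ℕ) = (J ℓ : ℕ) := fun ℓ hℓ => by simp [hJ'def, hℓ]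
  set C' := ((Finset.range k).image fun ℓ => (I' ℓ, J' ℓ)) ∪
        ((Finset.range k).image fun ℓ => (I' ((ℓ + 1) % k), J' ℓ)) with hC'
  have hgen : ∀ s ℓ : ℕ, s < k → ℓ < k → (I s, J ℓ) ∈ C → (I' s, J' ℓ) ∈ E' := by
    intro s ℓ hs hℓ hmem
    obtain ⟨e', he', heq⟩ := Finset.mem_image.mp (hCA hmem)
    have h1 : (e'.1 : ℕ) = (I s : ℕ) := by
      have := congrArg Prod.fst heq; exact congrArg Fin.val this
    have h2 : (e'.2 : ℕ) = (J ℓ : ℕ) := by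
      have := congrArg Prod.snd heq; exact congrArg Fin.val this
    have : e' = (I' s, J' ℓ) := by
      apply Prod.ext
      · apply Fin.ext; rw [h1, hIval s hs]
      · apply Fin.ext; rw [h2, hJval ℓ hℓ]
    rwa [this] at he'
  have hsub : C' ⊆ E' := by
    intro x hx
    rcases Finset.mem_union.mp hx with hh | hh
    · obtain ⟨ℓ, hℓ, rfl⟩ := Finset.mem_image.mp hh
      have hℓk := Finset.mem_range.mp hℓ
      exact hgen ℓ ℓ hℓk hℓk (cycle_mem₁ hC hℓk)
    · obtain ⟨ℓ, hℓ, rfl⟩ := Finset.mem_image.mp hh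
      have hℓk := Finset.mem_range.mp hℓ
      exact hgen _ ℓ (Nat.mod_lt _ (by omega)) hℓk (cycle_mem₂ hC hℓk)
  apply hE' C' hsub
  refine ⟨k, hk, I', J', ?_, ?_, hC'⟩
  · intro ℓ1 hℓ1 ℓ2 hℓ2 heq
    have h1 : (I ℓ1 : ℕ) = (I ℓ2 : ℕ) := by
      rw [← hIval ℓ1 hℓ1, ← hIval ℓ2 hℓ2, heq]
    exact hI hℓ1 hℓ2 (Fin.ext h1)
  · intro ℓ1 hℓ1 ℓ2 hℓ2 heq
    have h1 : (J ℓ1 : ℕ) = (J ℓ2 : ℕ) := by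
      rw [← hJval ℓ1 hℓ1, ← hJval ℓ2 hℓ2, heq]
    exact hJ hℓ1 hℓ2 (Fin.ext h1)

lemma union_acyclic_of_sides {m n : ℕ} (m' n' : ℕ) (A B : Finset (Fin m × Fin n))
    (hA : ∀ e ∈ A, (e.1 : ℕ) < m' ∧ (e.2 : ℕ) < n')
    (hB : ∀ e ∈ B, m' ≤ (e.1 : ℕ) ∧ n' ≤ (e.2 : ℕ))
    (hAa : IsAcyclicEdges A) (hBa : IsAcyclicEdges B) : IsAcyclicEdges (A ∪ B) := by
  rintro C hCA ⟨k, hk, I, J, hI, hJ, hC⟩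
  have hside : ∀ e ∈ C, ((e.1 : ℕ) < m' ∧ (e.2 : ℕ) < n') ∨ (m' ≤ (e.1 : ℕ) ∧ n' ≤ (e.2 : ℕ)) := by
    intro e he
    rcases Finset.mem_union.mp (hCA he) with hh | hh
    · exact Or.inl (hA e hh)
    · exact Or.inr (hB e hh)
  rcases cycle_side hk hC hside with hall | hall
  · apply hAa C _ ⟨k, hk, I, J, hI, hJ, hC⟩
    intro e he
    rcases Finset.mem_union.mp (hCA he) with hh | hh
    · exact hh
    · have := hB e hh
      have := hall e he
      omega
  · apply hBa C _ ⟨k, hk, I, J, hI, hJ, hC⟩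
    intro e he
    rcases Finset.mem_union.mp (hCA he) with hh | hh
    · have := hA e hh
      have := hall e he
      omega
    · exact hh

end Lemmas4

section Lemmas5
open Finset

variable {F : Type*} [Field F]

lemma sum_fin_restrict {n' n : ℕ} (hn : n' ≤ n) (f : Fin n → F)
    (hf : ∀ j : Fin n, n' ≤ (j : ℕ) → f j = 0) :
    ∑ j, f j = ∑ j' : Fin n', f (Fin.castLE hn j') := by
  classical
  have himg := Finset.sum_image (f := f) (s := (Finset.univ : Finset (Fin n')))
    (g := fun j' : Fin n' => Fin.castLE hn j')
    (fun x _ y _ hxy => Fin.castLE_injective hn hxy)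
  rw [← himg]
  symm
  apply Finset.sum_subset (Finset.subset_univ _)
  intro x _ hx
  apply hf
  by_contra hlt
  push_neg at hlt
  exact hx (Finset.mem_image.mpr ⟨⟨(x : ℕ), hlt⟩, Finset.mem_univ _, Fin.ext rfl⟩)

lemma sum_grid_restrict {m' n' m n : ℕ} (hm : m' ≤ m) (hn : n' ≤ n)
    (f : Fin m × Fin n → F)
    (hf : ∀ p : Fin m × Fin n, ¬((p.1 : ℕ) < m' ∧ (p.2 : ℕ) < n') → f p = 0) :
    ∑ p, f p = ∑ p' : Fin m' × Fin n', f (Fin.castLE hm p'.1, Fin.castLE hn p'.2) := by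
  classical
  rw [Fintype.sum_prod_type, Fintype.sum_prod_type]
  rw [sum_fin_restrict hm (fun i => ∑ j, f (i, j))
    (fun i hi => Finset.sum_eq_zero fun j _ => hf (i, j) (by dsimp only; omega))]
  apply Finset.sum_congr rfl
  intro i' _
  exact sum_fin_restrict hn (fun j => f (Fin.castLE hm i', j))
    (fun j hj => hf (Fin.castLE hm i', j) (by dsimp only; omega))

end Lemmas5

section Lemmas6
open Finset

variable {F : Type*} [Field F]

lemma sum_ind_snd {α β : Type*} [Fintype β] [DecidableEq α] [DecidableEq β]
    (a0 : α) (b0 : β) (r : α) :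
    ∑ b : β, (if (r, b) = (a0, b0) then (1 : F) else 0) = if r = a0 then 1 else 0 := by
  simp [Prod.ext_iff, ite_and]

lemma sum_ind_fst {α β : Type*} [Fintype α] [DecidableEq α] [DecidableEq β]
    (a0 : α) (b0 : β) (s : β) :
    ∑ a : α, (if (a, s) = (a0, b0) then (1 : F) else 0) = if s = b0 then 1 else 0 := by
  by_cases hs : s = b0
  · subst hs; simp [Prod.ext_iff]
  · simp [Prod.ext_iff, hs]

lemma sum_ind_mul {γ : Type*} [Fintype γ] [DecidableEq γ] (q : γ) (g : γ → F) :
    ∑ p : γ, (if p = q then (1 : F) else 0) * g p = g q := by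
  simp [ite_mul]

end Lemmas6

/-- Theorem A.1.  Let `h ≥ h' ≥ 1` and let `h₁, h₂ ≥ 1` satisfy
`(h₁ - 1)(h₂ - 1) ≥ h - h'`, with `m - h₁ ≥ 2` and `n - h₂ ≥ 2`.  If an MR
`(m, n, a=1, b=1, h)` grid code exists over `F_q`, then an MR
`(m - h₁, n - h₂, a=1, b=1, h')` grid code exists over the same field, so
`q(m, n, 1, 1, h) ≥ q(m - h₁, n - h₂, 1, 1, h')`. -/
theorem statement13 (m n h h' h₁ h₂ : ℕ) (hh'pos : 1 ≤ h') (hh' : h' ≤ h)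
    (hh₁ : 1 ≤ h₁) (hh₂ : 1 ≤ h₂) (hprod : h - h' ≤ (h₁ - 1) * (h₂ - 1))
    (hm : 2 ≤ m - h₁) (hn : 2 ≤ n - h₂)
    (F : Type*) [Field F] [Fintype F]
    (hex : ∃ c : Fin m × Fin n → Fin h → F, IsMR F m n h c) :
    ∃ c' : Fin (m - h₁) × Fin (n - h₂) → Fin h' → F,
      IsMR F (m - h₁) (n - h₂) h' c' := by
  classical
  obtain ⟨c, hc⟩ := hex
  have hcK := (isMR_iff_kernel m n h c).mp hc
  set m' := m - h₁ with hm'def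
  set n' := n - h₂ with hn'def
  set t := h - h' with htdef
  have hm'le : m' ≤ m := Nat.sub_le m h₁
  have hn'le : n' ≤ n := Nat.sub_le n h₂
  have hmeq : m = m' + h₁ := by omega
  have hneq : n = n' + h₂ := by omega
  have hm0 : m' < m := by omega
  have hn0 : n' < n := by omega
  set r0 : Fin m := ⟨m', hm0⟩ with hr0def
  set s0 : Fin n := ⟨n', hn0⟩ with hs0def
  set emb : Fin m' × Fin n' → Fin m × Fin n :=
    fun p' => (Fin.castLE hm'le p'.1, Fin.castLE hn'le p'.2) with hembdef
  have hemb1 : ∀ p' : Fin m' × Fin n', ((emb p').1 : ℕ) = (p'.1 : ℕ) := fun p' => rfl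
  have hemb2 : ∀ p' : Fin m' × Fin n', ((emb p').2 : ℕ) = (p'.2 : ℕ) := fun p' => rfl
  have hdiv : ∀ i : Fin t, (i : ℕ) / (h₂ - 1) + 1 < h₁ ∧ (i : ℕ) % (h₂ - 1) + 1 < h₂ := by
    intro i
    have hi : (i : ℕ) < t := i.2
    have h2pos : 0 < h₂ - 1 := by
      rcases Nat.eq_zero_or_pos (h₂ - 1) with hz | hp
      · rw [hz, Nat.mul_zero] at hprod; omega
      · exact hp
    constructor
    · have hlt : (i : ℕ) < (h₁ - 1) * (h₂ - 1) := lt_of_lt_of_le hi hprod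
      have : (i : ℕ) / (h₂ - 1) < h₁ - 1 := (Nat.div_lt_iff_lt_mul h2pos).mpr hlt
      omega
    · have := Nat.mod_lt (i : ℕ) h2pos
      omega
  set ar : Fin t → Fin m :=
    fun i => ⟨m' + ((i : ℕ) / (h₂ - 1) + 1), by have := (hdiv i).1; omega⟩ with hardef
  set sb : Fin t → Fin n :=
    fun i => ⟨n' + ((i : ℕ) % (h₂ - 1) + 1), by have := (hdiv i).2; omega⟩ with hsbdef
  have har_val : ∀ i, (ar i : ℕ) = m' + ((i : ℕ) / (h₂ - 1) + 1) := fun i => rfl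
  have hsb_val : ∀ i, (sb i : ℕ) = n' + ((i : ℕ) % (h₂ - 1) + 1) := fun i => rfl
  have hr0v : (r0 : ℕ) = m' := rfl
  have hs0v : (s0 : ℕ) = n' := rfl
  have har_ne : ∀ i, ar i ≠ r0 := by
    intro i hh
    have hv : (ar i : ℕ) = (r0 : ℕ) := congrArg Fin.val hh
    rw [har_val i, hr0v] at hv
    generalize (i : ℕ) / (h₂ - 1) = q at hv
    omega
  have hsb_ne : ∀ i, sb i ≠ s0 := by
    intro i hh
    have hv : (sb i : ℕ) = (s0 : ℕ) := congrArg Fin.val hh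
    rw [hsb_val i, hs0v] at hv
    generalize (i : ℕ) % (h₂ - 1) = q at hv
    omega
  have harsb_inj : ∀ i i' : Fin t, ar i' = ar i → sb i' = sb i → i' = i := by
    intro i i' h1 h2
    have hv1 := congrArg Fin.val h1
    have hv2 := congrArg Fin.val h2
    rw [har_val, har_val] at hv1
    rw [hsb_val, hsb_val] at hv2
    have e1 := Nat.div_add_mod (i' : ℕ) (h₂ - 1)
    have e2 := Nat.div_add_mod (i : ℕ) (h₂ - 1)
    apply Fin.ext
    have hd : (i' : ℕ) / (h₂ - 1) = (i : ℕ) / (h₂ - 1) := by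
      generalize (i' : ℕ) / (h₂ - 1) = q1 at hv1
      generalize (i : ℕ) / (h₂ - 1) = q2 at hv1
      omega
    rw [hd] at e1
    generalize (h₂ - 1) * ((i : ℕ) / (h₂ - 1)) = P at e1 e2
    generalize (i' : ℕ) % (h₂ - 1) = q3 at hv2 e1
    generalize (i : ℕ) % (h₂ - 1) = q4 at hv2 e2
    omega
  -- the 4-cycle flows
  set Y : Fin t → Fin m × Fin n → F := fun i e =>
    (if e = (r0, s0) then (1 : F) else 0) - (if e = (r0, sb i) then 1 else 0)
    - (if e = (ar i, s0) then 1 else 0) + (if e = (ar i, sb i) then 1 else 0) with hYdef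
  set v : Fin t → Fin h → F := fun i =>
    c (r0, s0) - c (r0, sb i) - c (ar i, s0) + c (ar i, sb i) with hvdef
  have hYrow : ∀ i (r : Fin m), ∑ j, Y i (r, j) = 0 := by
    intro i r
    simp only [hYdef]
    rw [Finset.sum_add_distrib, Finset.sum_sub_distrib, Finset.sum_sub_distrib,
      sum_ind_snd r0 s0 r, sum_ind_snd r0 (sb i) r, sum_ind_snd (ar i) s0 r,
      sum_ind_snd (ar i) (sb i) r]
    ring
  have hYcol : ∀ i (j : Fin n), ∑ r, Y i (r, j) = 0 := by
    intro i j
    simp only [hYdef]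
    rw [Finset.sum_add_distrib, Finset.sum_sub_distrib, Finset.sum_sub_distrib,
      sum_ind_fst r0 s0 j, sum_ind_fst r0 (sb i) j, sum_ind_fst (ar i) s0 j,
      sum_ind_fst (ar i) (sb i) j]
    ring
  have hYglob : ∀ i (k : Fin h), ∑ p, c p k * Y i p = v i k := by
    intro i k
    simp only [hYdef]
    have expand : ∀ p : Fin m × Fin n, c p k *
        ((if p = (r0, s0) then (1 : F) else 0) - (if p = (r0, sb i) then 1 else 0)
          - (if p = (ar i, s0) then 1 else 0) + (if p = (ar i, sb i) then 1 else 0))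
        = (if p = (r0, s0) then (1 : F) else 0) * c p k
          - (if p = (r0, sb i) then (1 : F) else 0) * c p k
          - (if p = (ar i, s0) then (1 : F) else 0) * c p k
          + (if p = (ar i, sb i) then (1 : F) else 0) * c p k := by
      intro p; ring
    rw [Finset.sum_congr rfl fun p _ => expand p]
    rw [Finset.sum_add_distrib, Finset.sum_sub_distrib, Finset.sum_sub_distrib,
      sum_ind_mul (r0, s0) (fun p => c p k), sum_ind_mul (r0, sb i) (fun p => c p k),
      sum_ind_mul (ar i, s0) (fun p => c p k), sum_ind_mul (ar i, sb i) (fun p => c p k)]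
    simp [hvdef]
  have hYemb : ∀ i (p' : Fin m' × Fin n'), Y i (emb p') = 0 := by
    intro i p'
    have h1 : (emb p').1 ≠ r0 := by
      intro hh
      have hv : ((emb p').1 : ℕ) = (r0 : ℕ) := congrArg Fin.val hh
      rw [hemb1, hr0v] at hv
      have := p'.1.2; omega
    have h2 : (emb p').1 ≠ ar i := by
      intro hh
      have hv : ((emb p').1 : ℕ) = (ar i : ℕ) := congrArg Fin.val hh
      rw [hemb1, har_val] at hv
      have := p'.1.2
      generalize (i : ℕ) / (h₂ - 1) = q at hv
      omega
    have hsplit : emb p' = ((emb p').1, (emb p').2) := rfl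
    rw [hsplit]
    simp [hYdef, Prod.ext_iff, h1, h2]
  have hYat : ∀ i i' : Fin t, Y i' (ar i, sb i) = if i' = i then 1 else 0 := by
    intro i i'
    have h1 : (ar i, sb i) ≠ ((r0 : Fin m), s0) := by
      simp [Prod.ext_iff]; intro hh; exact absurd hh (har_ne i)
    have h2 : (ar i, sb i) ≠ (r0, sb i') := by
      simp [Prod.ext_iff]; intro hh; exact absurd hh (har_ne i)
    have h3 : (ar i, sb i) ≠ (ar i', s0) := by
      simp [Prod.ext_iff]; intro _ hh; exact absurd hh (hsb_ne i)
    have h4 : ((ar i, sb i) = (ar i', sb i')) ↔ (i' = i) := by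
      constructor
      · intro hh
        rw [Prod.ext_iff] at hh
        exact harsb_inj i i' hh.1.symm hh.2.symm
      · intro hh; rw [hh]
    simp only [hYdef, h1, h2, h3, if_false]
    by_cases hi : i' = i
    · simp [h4.mpr hi, hi]
    · have : ¬ ((ar i, sb i) = (ar i', sb i')) := fun hh => hi (h4.mp hh)
      simp [this, hi]
  -- star and extra edge sets
  set T_U : Finset (Fin m × Fin n) := Finset.univ.filter
    (fun e => (e.1 = r0 ∧ n' ≤ (e.2 : ℕ)) ∨ (e.2 = s0 ∧ m' ≤ (e.1 : ℕ))) with hTUdef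
  set X : Finset (Fin m × Fin n) := Finset.univ.image (fun i : Fin t => (ar i, sb i)) with hXdef
  have hTU_mem : ∀ e : Fin m × Fin n,
      e ∈ T_U ↔ ((e.1 = r0 ∧ n' ≤ (e.2 : ℕ)) ∨ (e.2 = s0 ∧ m' ≤ (e.1 : ℕ))) := by
    intro e; rw [hTUdef]; simp
  have hTU_acyc : IsAcyclicEdges T_U := by
    apply star_acyclic r0 s0
    intro e he
    rcases (hTU_mem e).mp he with ⟨hh, _⟩ | ⟨hh, _⟩
    · exact Or.inl hh
    · exact Or.inr hh
  have hTU_big : ∀ e ∈ T_U, m' ≤ (e.1 : ℕ) ∧ n' ≤ (e.2 : ℕ) := by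
    intro e he
    rcases (hTU_mem e).mp he with ⟨hh, hh2⟩ | ⟨hh, hh2⟩
    · refine ⟨?_, hh2⟩
      rw [hh, hr0v]
    · refine ⟨hh2, ?_⟩
      rw [hh, hs0v]
  have hXcells : ∀ i : Fin t, (ar i, sb i) ∈ X := by
    intro i; rw [hXdef]; exact Finset.mem_image.mpr ⟨i, Finset.mem_univ _, rfl⟩
  have hr0s0TU : ((r0, s0) : Fin m × Fin n) ∈ T_U :=
    (hTU_mem _).mpr (Or.inl ⟨rfl, by rw [hs0v]⟩)
  have hr0sbTU : ∀ i, ((r0, sb i) : Fin m × Fin n) ∈ T_U := fun i =>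
    (hTU_mem _).mpr (Or.inl ⟨rfl, by rw [hsb_val]; exact Nat.le_add_right _ _⟩)
  have harS0TU : ∀ i, ((ar i, s0) : Fin m × Fin n) ∈ T_U := fun i =>
    (hTU_mem _).mpr (Or.inr ⟨rfl, by rw [har_val]; exact Nat.le_add_right _ _⟩)
  have hXcard : X.card ≤ t := le_trans Finset.card_image_le (by simp)
  have htle : t ≤ h := Nat.sub_le h h'
  -- combinations of the 4-cycle flows in the kernel are trivial
  have hYcomb : ∀ α : Fin t → F, (∀ k, ∑ i, α i * v i k = 0) → ∀ i, α i = 0 := by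
    intro α hα i
    set y : Fin m × Fin n → F := fun e => ∑ i', α i' * Y i' e with hydef
    have hy0 : y = 0 := by
      apply hcK (T_U ∪ X) ⟨T_U, X, hTU_acyc, le_trans hXcard htle, rfl⟩
      · intro e he
        rw [hydef]
        apply Finset.sum_eq_zero
        intro i' _
        have hY0 : Y i' e = 0 := by
          have c1 : e ≠ (r0, s0) := fun hh => he
            (by rw [hh]; exact Finset.mem_union_left _ hr0s0TU)
          have c2 : e ≠ (r0, sb i') := fun hh => he
            (by rw [hh]; exact Finset.mem_union_left _ (hr0sbTU i'))
          have c3 : e ≠ (ar i', s0) := fun hh => he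
            (by rw [hh]; exact Finset.mem_union_left _ (harS0TU i'))
          have c4 : e ≠ (ar i', sb i') := fun hh => he
            (by rw [hh]; exact Finset.mem_union_right _ (hXcells i'))
          simp [hYdef, c1, c2, c3, c4]
        rw [hY0, mul_zero]
      · funext r
        rw [Pi.zero_apply]
        rcases r with i0 | j0 | k0
        · rw [gridH_mulVec_row, hydef]
          rw [Finset.sum_comm]
          apply Finset.sum_eq_zero
          intro i' _
          rw [← Finset.mul_sum, hYrow i' i0, mul_zero]
        · rw [gridH_mulVec_col, hydef]
          rw [Finset.sum_comm]
          apply Finset.sum_eq_zero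
          intro i' _
          rw [← Finset.mul_sum, hYcol i' _, mul_zero]
        · rw [gridH_mulVec_glob]
          have hexp : ∀ p, c p k0 * y p = ∑ i', α i' * (c p k0 * Y i' p) := by
            intro p
            rw [hydef]
            dsimp only
            rw [Finset.mul_sum]
            apply Finset.sum_congr rfl
            intro i' _
            ring
          rw [Finset.sum_congr rfl fun p _ => hexp p, Finset.sum_comm]
          have h2 : ∀ i' : Fin t, ∑ p, α i' * (c p k0 * Y i' p) = α i' * v i' k0 := by
            intro i'
            rw [← Finset.mul_sum, hYglob]
          rw [Finset.sum_congr rfl fun i' _ => h2 i']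
          exact hα k0
    have heval : ∑ i', α i' * Y i' (ar i, sb i) = 0 := by
      have := congrFun hy0 (ar i, sb i)
      simpa [hydef] using this
    rw [Finset.sum_congr rfl fun i' _ => by rw [hYat i i']] at heval
    simpa [mul_ite] using heval
  have hv_li : LinearIndependent F v := by
    apply Fintype.linearIndependent_iff.mpr
    intro α hα
    apply hYcomb α
    intro k
    have := congrFun hα k
    rw [Finset.sum_apply, Pi.zero_apply] at this
    simpa [smul_eq_mul] using this
  -- the projection L
  set V : Submodule F (Fin h → F) := Submodule.span F (Set.range v) with hVdef
  have hVfr : Module.finrank F V = t := by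
    have := finrank_span_eq_card hv_li
    rw [hVdef]
    simpa using this
  have hfunfr : Module.finrank F (Fin h → F) = h := by
    rw [Module.finrank_fintype_fun_eq_card, Fintype.card_fin]
  have hQfr' : Module.finrank F ((Fin h → F) ⧸ V) = Module.finrank F (Fin h' → F) := by
    have hq := Submodule.finrank_quotient_add_finrank V
    rw [hfunfr, hVfr] at hq
    rw [Module.finrank_fintype_fun_eq_card, Fintype.card_fin]
    omega
  set eqv : ((Fin h → F) ⧸ V) ≃ₗ[F] (Fin h' → F) := LinearEquiv.ofFinrankEq _ _ hQfr' with heqvdef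
  set L : (Fin h → F) →ₗ[F] (Fin h' → F) := eqv.toLinearMap.comp V.mkQ with hLdef
  have hkerL : LinearMap.ker L = V := by
    rw [hLdef, LinearMap.ker_comp, LinearEquiv.ker, Submodule.comap_bot, Submodule.ker_mkQ]
  -- the small code
  set c' : Fin m' × Fin n' → Fin h' → F := fun p' => L (c (emb p')) with hc'def
  refine ⟨c', ?_⟩
  rw [isMR_iff_kernel]
  intro E hEdec z hsupp hker
  obtain ⟨E', F', hE'ac, hF'card, rfl⟩ := hEdec
  -- extract the small parity checks
  have hrow_s : ∀ i : Fin m', ∑ j, z (i, j) = 0 := by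
    intro i
    have := congrFun hker (Sum.inl i)
    rwa [gridH_mulVec_row, Pi.zero_apply] at this
  have hcol_s' : ∀ j : Fin (n' - 1), ∑ i, z (i, Fin.castLE (Nat.sub_le n' 1) j) = 0 := by
    intro j
    have := congrFun hker (Sum.inr (Sum.inl j))
    rwa [gridH_mulVec_col, Pi.zero_apply] at this
  have hcol_s : ∀ j : Fin n', ∑ i, z (i, j) = 0 := fun j => colsum_all z hrow_s hcol_s' j
  have hglob_s : ∀ k, ∑ p, c' p k * z p = 0 := by
    intro k
    have := congrFun hker (Sum.inr (Sum.inr k))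
    rwa [gridH_mulVec_glob, Pi.zero_apply] at this
  -- the lifted vector
  set zb : Fin m × Fin n → F := fun e =>
    if hh : (e.1 : ℕ) < m' ∧ (e.2 : ℕ) < n' then z (⟨(e.1 : ℕ), hh.1⟩, ⟨(e.2 : ℕ), hh.2⟩) else 0
    with hzbdef
  have hzb_not : ∀ e, ¬((e.1 : ℕ) < m' ∧ (e.2 : ℕ) < n') → zb e = 0 := by
    intro e he; rw [hzbdef]; exact dif_neg he
  have hzb_emb : ∀ p' : Fin m' × Fin n', zb (emb p') = z p' := by
    intro p'
    have hcond : ((emb p').1 : ℕ) < m' ∧ ((emb p').2 : ℕ) < n' := ⟨p'.1.2, p'.2.2⟩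
    rw [hzbdef]
    dsimp only
    rw [dif_pos hcond]
    exact congrArg z (Prod.ext (Fin.ext rfl) (Fin.ext rfl))
  have hzb_row : ∀ r : Fin m, ∑ j, zb (r, j) = 0 := by
    intro r
    by_cases hr : (r : ℕ) < m'
    · rw [sum_fin_restrict hn'le (fun j => zb (r, j))
        (fun j hj => hzb_not (r, j) (by dsimp only; omega))]
      have hterm : ∀ j' : Fin n', zb (r, Fin.castLE hn'le j') = z (⟨(r : ℕ), hr⟩, j') := by
        intro j'
        exact hzb_emb (⟨(r : ℕ), hr⟩, j')
      rw [Finset.sum_congr rfl fun j' _ => hterm j']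
      exact hrow_s _
    · apply Finset.sum_eq_zero
      intro j _
      exact hzb_not (r, j) (by dsimp only; omega)
  have hzb_col : ∀ j : Fin n, ∑ r, zb (r, j) = 0 := by
    intro j
    by_cases hj : (j : ℕ) < n'
    · rw [sum_fin_restrict hm'le (fun r => zb (r, j))
        (fun r hr => hzb_not (r, j) (by dsimp only; omega))]
      have hterm : ∀ i' : Fin m', zb (Fin.castLE hm'le i', j) = z (i', ⟨(j : ℕ), hj⟩) := by
        intro i'
        exact hzb_emb (i', ⟨(j : ℕ), hj⟩)
      rw [Finset.sum_congr rfl fun i' _ => hterm i']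
      exact hcol_s _
    · apply Finset.sum_eq_zero
      intro r _
      exact hzb_not (r, j) (by dsimp only; omega)
  -- the global sum vector
  set u : Fin h → F := fun k => ∑ p' : Fin m' × Fin n', z p' * c (emb p') k with hudef
  have hu_big : ∀ k, ∑ p, c p k * zb p = u k := by
    intro k
    rw [sum_grid_restrict hm'le hn'le (fun p => c p k * zb p)
      (fun p hp => by rw [hzb_not p hp, mul_zero])]
    rw [hudef]
    apply Finset.sum_congr rfl
    intro p' _
    show c (emb p') k * zb (emb p') = z p' * c (emb p') k
    rw [hzb_emb p', mul_comm]
  have hLu : L u = 0 := by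
    have hu_sum : u = ∑ p' : Fin m' × Fin n', z p' • c (emb p') := by
      funext k
      rw [hudef]
      dsimp only
      rw [Finset.sum_apply]
      apply Finset.sum_congr rfl
      intro p' _
      rw [Pi.smul_apply, smul_eq_mul]
    rw [hu_sum, map_sum]
    funext k
    rw [Finset.sum_apply, Pi.zero_apply]
    have hterm : ∀ p' : Fin m' × Fin n', (L (z p' • c (emb p'))) k = c' p' k * z p' := by
      intro p'
      rw [map_smul, Pi.smul_apply, smul_eq_mul, mul_comm]
    rw [Finset.sum_congr rfl fun p' _ => hterm p']
    exact hglob_s k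
  have humem : u ∈ Submodule.span F (Set.range v) := by
    rw [← hVdef, ← hkerL]
    exact LinearMap.mem_ker.mpr hLu
  obtain ⟨α, hα⟩ := (Submodule.mem_span_range_iff_exists_fun F).mp humem
  -- the big kernel vector
  set zbig : Fin m × Fin n → F := fun e => zb e - ∑ i, α i * Y i e with hzbigdef
  set embE' : Finset (Fin m × Fin n) := E'.image emb with hembE'def
  set embF' : Finset (Fin m × Fin n) := F'.image emb with hembF'def
  have hacyc : IsAcyclicEdges (embE' ∪ T_U) := by
    apply union_acyclic_of_sides m' n'
    · intro e he
      obtain ⟨p', hp', rfl⟩ := Finset.mem_image.mp he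
      exact ⟨p'.1.2, p'.2.2⟩
    · exact hTU_big
    · exact embed_acyclic hm'le hn'le (by omega) (by omega) E' hE'ac
    · exact hTU_acyc
  have hcard : (embF' ∪ X).card ≤ h := by
    have h1 : (embF' ∪ X).card ≤ embF'.card + X.card := Finset.card_union_le _ _
    have h2 : embF'.card ≤ F'.card := Finset.card_image_le
    omega
  have hzbig0 : zbig = 0 := by
    apply hcK ((embE' ∪ T_U) ∪ (embF' ∪ X)) ⟨embE' ∪ T_U, embF' ∪ X, hacyc, hcard, rfl⟩
    · intro e he
      have heY : ∀ i', Y i' e = 0 := by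
        intro i'
        have c1 : e ≠ (r0, s0) := fun hh => he
          (by rw [hh]; exact Finset.mem_union_left _ (Finset.mem_union_right _ hr0s0TU))
        have c2 : e ≠ (r0, sb i') := fun hh => he
          (by rw [hh]; exact Finset.mem_union_left _ (Finset.mem_union_right _ (hr0sbTU i')))
        have c3 : e ≠ (ar i', s0) := fun hh => he
          (by rw [hh]; exact Finset.mem_union_left _ (Finset.mem_union_right _ (harS0TU i')))
        have c4 : e ≠ (ar i', sb i') := fun hh => he
          (by rw [hh]; exact Finset.mem_union_right _ (Finset.mem_union_right _ (hXcells i')))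
        simp [hYdef, c1, c2, c3, c4]
      have hzbe : zb e = 0 := by
        by_cases hsmall : (e.1 : ℕ) < m' ∧ (e.2 : ℕ) < n'
        · have hembp : emb (⟨(e.1 : ℕ), hsmall.1⟩, ⟨(e.2 : ℕ), hsmall.2⟩) = e := by
            exact Prod.ext (Fin.ext rfl) (Fin.ext rfl)
          have hz0 : z (⟨(e.1 : ℕ), hsmall.1⟩, ⟨(e.2 : ℕ), hsmall.2⟩) = 0 := by
            apply hsupp
            intro hmem
            apply he
            rcases Finset.mem_union.mp hmem with hh | hh
            · refine Finset.mem_union_left _ (Finset.mem_union_left _ ?_)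
              rw [hembE'def, ← hembp]
              exact Finset.mem_image.mpr ⟨_, hh, rfl⟩
            · refine Finset.mem_union_right _ (Finset.mem_union_left _ ?_)
              rw [hembF'def, ← hembp]
              exact Finset.mem_image.mpr ⟨_, hh, rfl⟩
          rw [← hembp, hzb_emb, hz0]
        · exact hzb_not e hsmall
      rw [hzbigdef]
      dsimp only
      rw [hzbe]
      rw [Finset.sum_congr rfl fun i' _ => by rw [heY i', mul_zero]]
      simp
    · funext r
      rw [Pi.zero_apply]
      have hsplit : ∀ e, zbig e = zb e - ∑ i, α i * Y i e := fun e => by rw [hzbigdef]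
      rcases r with i0 | j0 | k0
      · rw [gridH_mulVec_row]
        rw [Finset.sum_congr rfl fun j _ => hsplit (i0, j), Finset.sum_sub_distrib, hzb_row i0]
        have h2 : ∑ j, ∑ i, α i * Y i (i0, j) = 0 := by
          rw [Finset.sum_comm]
          apply Finset.sum_eq_zero
          intro i' _
          rw [← Finset.mul_sum, hYrow i' i0, mul_zero]
        rw [h2, sub_zero]
      · rw [gridH_mulVec_col]
        rw [Finset.sum_congr rfl fun i _ => hsplit (i, _), Finset.sum_sub_distrib, hzb_col _]
        have h2 : ∑ r', ∑ i, α i * Y i (r', Fin.castLE (Nat.sub_le n 1) j0) = 0 := by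
          rw [Finset.sum_comm]
          apply Finset.sum_eq_zero
          intro i' _
          rw [← Finset.mul_sum, hYcol i' _, mul_zero]
        rw [h2, sub_zero]
      · rw [gridH_mulVec_glob]
        have hexp : ∀ p, c p k0 * zbig p = c p k0 * zb p - ∑ i, α i * (c p k0 * Y i p) := by
          intro p
          rw [hsplit p, mul_sub, Finset.mul_sum]
          congr 1
          apply Finset.sum_congr rfl
          intro i' _
          ring
        rw [Finset.sum_congr rfl fun p _ => hexp p, Finset.sum_sub_distrib, hu_big k0]
        have h2 : ∑ p, ∑ i, α i * (c p k0 * Y i p) = u k0 := by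
          rw [Finset.sum_comm]
          have h3 : ∀ i' : Fin t, ∑ p, α i' * (c p k0 * Y i' p) = α i' * v i' k0 := by
            intro i'
            rw [← Finset.mul_sum, hYglob]
          rw [Finset.sum_congr rfl fun i' _ => h3 i']
          have := congrFun hα k0
          rw [Finset.sum_apply] at this
          simpa [smul_eq_mul] using this
        rw [h2, sub_self]
  -- conclude
  funext p'
  have h1 := congrFun hzbig0 (emb p')
  rw [Pi.zero_apply] at h1
  rw [hzbigdef] at h1
  dsimp only at h1
  rw [hzb_emb p'] at h1
  have h2 : ∑ i, α i * Y i (emb p') = 0 := by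
    apply Finset.sum_eq_zero
    intro i _
    rw [hYemb i p', mul_zero]
  rw [h2, sub_zero] at h1
  exact h1
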